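/- Let G be a finite group, H ≤ G, and let L be a left ideal of ℂ[G] such that π_H(L) ⊆ L, where π_H is the linear projection onto the span of H (keeping only coefficients at elements of H). Let U = π_H(L). Then U is a left ideal of ℂ[H], L = ℂ[G]·U, and L = ⊕_{b ∈ G/H} b·U (direct sum over a set of representatives b of the left cosets of H in G). -/

import Mathlib

open scoped Classical

/-- The projection `π_H : ℂ[G] → ℂ[G]` keeping only the coefficients at elements of `H`. -/
noncomputable def piSub {G : Type*} [Group G] [Fintype G] (H : Subgroup G)
    (a : MonoidAlgebra ℂ G) : MonoidAlgebra ℂ G :=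
  ∑ h : H, MonoidAlgebra.single (h : G) (a.coeff (h : G))

section Aux

variable {G : Type*} [Group G] [Fintype G] (H : Subgroup G)

lemma piSub_apply (a : MonoidAlgebra ℂ G) (g : G) :
    (piSub H a).coeff g = if g ∈ H then a.coeff g else 0 := by
  classical
  rw [piSub, MonoidAlgebra.coeff_sum, Finsupp.finset_sum_apply]
  simp only [MonoidAlgebra.coeff_single, Finsupp.single_apply]
  by_cases hg : g ∈ H
  · rw [if_pos hg, Finset.sum_eq_single (⟨g, hg⟩ : H)]
    · simp
    · intro h _ hne
      rw [if_neg fun hc => hne (Subtype.ext hc)]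
    · intro h; exact absurd (Finset.mem_univ _) h
  · rw [if_neg hg]
    exact Finset.sum_eq_zero fun h _ => if_neg fun hc => hg (by rw [← hc]; exact h.2)

lemma piSub_of_supported (a : MonoidAlgebra ℂ G) (ha : ∀ g : G, a.coeff g ≠ 0 → g ∈ H) :
    piSub H a = a := by
  ext g
  rw [piSub_apply]
  by_cases hg : g ∈ H
  · rw [if_pos hg]
  · rw [if_neg hg]
    by_contra hc
    exact hg (ha g fun h => hc h.symm)

lemma mem_U_iff (L : Ideal (MonoidAlgebra ℂ G)) (hL : ∀ a ∈ L, piSub H a ∈ L)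
    (U : Set (MonoidAlgebra ℂ G)) (hU : U = (fun a => piSub H a) '' L)
    (u : MonoidAlgebra ℂ G) :
    u ∈ U ↔ u ∈ L ∧ ∀ g : G, u.coeff g ≠ 0 → g ∈ H := by
  subst hU
  constructor
  · rintro ⟨a, haL, rfl⟩
    refine ⟨hL a haL, fun g hg => ?_⟩
    by_contra hgH
    exact hg (by rw [piSub_apply, if_neg hgH])
  · rintro ⟨huL, hsupp⟩
    exact ⟨u, huL, piSub_of_supported H u hsupp⟩

/-- The component of `a` on the coset `q`. -/
noncomputable def compQ (r : (G ⧸ H) → G) (a : MonoidAlgebra ℂ G) (q : G ⧸ H) :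
    MonoidAlgebra ℂ G :=
  MonoidAlgebra.of ℂ G (r q) * piSub H (MonoidAlgebra.of ℂ G (r q)⁻¹ * a)

lemma compQ_apply (r : (G ⧸ H) → G) (hr : ∀ q : G ⧸ H, (QuotientGroup.mk (r q) : G ⧸ H) = q)
    (a : MonoidAlgebra ℂ G) (q : G ⧸ H) (g : G) :
    (compQ H r a q).coeff g = if (QuotientGroup.mk g : G ⧸ H) = q then a.coeff g else 0 := by
  rw [compQ, MonoidAlgebra.of_apply, MonoidAlgebra.single_mul_apply, one_mul, piSub_apply,
    MonoidAlgebra.of_apply, MonoidAlgebra.single_mul_apply, one_mul]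
  have hmem : (r q)⁻¹ * g ∈ H ↔ (QuotientGroup.mk g : G ⧸ H) = q := by
    conv_rhs => rw [← hr q]
    rw [eq_comm, QuotientGroup.eq]
  rw [inv_inv, mul_inv_cancel_left]
  by_cases h : (QuotientGroup.mk g : G ⧸ H) = q
  · rw [if_pos (hmem.mpr h), if_pos h]
  · rw [if_neg (fun hc => h (hmem.mp hc)), if_neg h]

lemma sum_compQ (r : (G ⧸ H) → G) (hr : ∀ q : G ⧸ H, (QuotientGroup.mk (r q) : G ⧸ H) = q)
    (a : MonoidAlgebra ℂ G) : ∑ q : G ⧸ H, compQ H r a q = a := by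
  ext g
  rw [MonoidAlgebra.coeff_sum, Finsupp.finset_sum_apply]
  simp only [compQ_apply H r hr]
  simp

lemma compQ_mem_U (L : Ideal (MonoidAlgebra ℂ G))
    (U : Set (MonoidAlgebra ℂ G)) (hU : U = (fun a => piSub H a) '' L)
    (r : (G ⧸ H) → G) (a : MonoidAlgebra ℂ G) (haL : a ∈ L) (q : G ⧸ H) :
    compQ H r a q ∈ (fun u => MonoidAlgebra.of ℂ G (r q) * u) '' U := by
  refine ⟨piSub H (MonoidAlgebra.of ℂ G (r q)⁻¹ * a), ?_, rfl⟩
  rw [hU]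
  exact ⟨_, L.mul_mem_left _ haL, rfl⟩

end Aux

theorem inducedIdeal_structure {G : Type*} [Group G] [Fintype G] (H : Subgroup G)
    (L : Ideal (MonoidAlgebra ℂ G)) (hL : ∀ a ∈ L, piSub H a ∈ L)
    (U : Set (MonoidAlgebra ℂ G)) (hU : U = (fun a => piSub H a) '' L)
    (r : (G ⧸ H) → G) (hr : ∀ q : G ⧸ H, (QuotientGroup.mk (r q) : G ⧸ H) = q) :
    (∀ z : MonoidAlgebra ℂ G, (∀ g : G, z.coeff g ≠ 0 → g ∈ H) → ∀ u ∈ U, z * u ∈ U) ∧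
    L = Ideal.span U ∧
    (∀ a : MonoidAlgebra ℂ G, a ∈ L ↔
      ∃! c : (G ⧸ H) → MonoidAlgebra ℂ G,
        (∀ q : G ⧸ H, c q ∈ (fun u => MonoidAlgebra.of ℂ G (r q) * u) '' U) ∧
          a = ∑ q : G ⧸ H, c q) := by
  classical
  have memU := mem_U_iff H L hL U hU
  -- membership in of(r q) * U forces support in the coset q
  have hcoset : ∀ (q : G ⧸ H) (x : MonoidAlgebra ℂ G),
      x ∈ (fun u => MonoidAlgebra.of ℂ G (r q) * u) '' U →
      ∀ g : G, x.coeff g ≠ 0 → (QuotientGroup.mk g : G ⧸ H) = q := by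
    rintro q x ⟨u, huU, rfl⟩ g hg
    rw [MonoidAlgebra.of_apply, MonoidAlgebra.single_mul_apply, one_mul] at hg
    have : (r q)⁻¹ * g ∈ H := ((memU u).mp huU).2 _ hg
    rw [← hr q, eq_comm, QuotientGroup.eq]
    exact this
  have hUL : ∀ u ∈ U, u ∈ L := fun u hu => ((memU u).mp hu).1
  refine ⟨?_, ?_, ?_⟩
  · -- U is a left ideal of ℂ[H]
    intro z hz u huU
    obtain ⟨huL, husupp⟩ := (memU u).mp huU
    refine (memU _).mpr ⟨L.mul_mem_left z huL, fun g hg => ?_⟩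
    have hsupp := MonoidAlgebra.support_coeff_mul_subset z u (Finsupp.mem_support_iff.mpr hg)
    rw [Finset.mem_mul] at hsupp
    obtain ⟨a, ha, b, hb, rfl⟩ := hsupp
    exact H.mul_mem (hz a (Finsupp.mem_support_iff.mp ha)) (husupp b (Finsupp.mem_support_iff.mp hb))
  · -- L = span U
    apply le_antisymm
    · intro a haL
      rw [← sum_compQ H r hr a]
      refine Ideal.sum_mem _ fun q _ => ?_
      unfold compQ
      refine Ideal.mul_mem_left _ _ (Ideal.subset_span ?_)
      rw [hU]
      exact ⟨_, L.mul_mem_left _ haL, rfl⟩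
    · exact Ideal.span_le.mpr fun u hu => hUL u hu
  · intro a
    constructor
    · intro haL
      refine ⟨compQ H r a, ⟨compQ_mem_U H L U hU r a haL, (sum_compQ H r hr a).symm⟩, ?_⟩
      rintro c ⟨hc, rfl⟩
      funext q
      ext g
      rw [compQ_apply H r hr]
      by_cases hgq : (QuotientGroup.mk g : G ⧸ H) = q
      · rw [if_pos hgq, MonoidAlgebra.coeff_sum, Finsupp.finset_sum_apply]
        symm
        apply Finset.sum_eq_single q
        · intro q' _ hq'
          by_contra hc0
          exact hq' ((hcoset q' _ (hc q') g hc0).symm.trans hgq)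
        · intro h; exact absurd (Finset.mem_univ _) h
      · rw [if_neg hgq]
        by_contra hc0
        exact hgq (hcoset q _ (hc q) g hc0)
    · rintro ⟨c, ⟨hc, rfl⟩, _⟩
      refine Ideal.sum_mem _ fun q _ => ?_
      obtain ⟨u, huU, heq⟩ := hc q
      exact heq ▸ Ideal.mul_mem_left _ _ (hUL u huU)
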